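/- Let A ∈ ℝ^{n×n}, C ∈ ℝ^{q×n}, and t₁ > 0. Then the column space of the observability Gramian W(t₁) equals the column space of Oᵀ, where O is the observability matrix of (C, A); equivalently, Im(W(t₁)) equals the row space of O viewed as a subspace of ℝ^n. -/

import Mathlib

open Matrix intervalIntegral

/-- Observability matrix of the pair `(C, A)`: the vertical block stack of
`C, C*A, C*A², …, C*A^(n-1)`, indexed so that entry `((k, i), j)` is `(C * A^k) i j`. -/
noncomputable def obsMat {n q : ℕ} (C : Matrix (Fin q) (Fin n) ℝ)
    (A : Matrix (Fin n) (Fin n) ℝ) : Matrix (Fin n × Fin q) (Fin n) ℝ :=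
  fun ki j => (C * A ^ (ki.1 : ℕ)) ki.2 j

/-- Observability Gramian `W(t₁) = ∫₀^{t₁} exp(Aᵀτ) Cᵀ C exp(Aτ) dτ` (entrywise integral). -/
noncomputable def obsGram {n q : ℕ} (A : Matrix (Fin n) (Fin n) ℝ)
    (C : Matrix (Fin q) (Fin n) ℝ) (t₁ : ℝ) : Matrix (Fin n) (Fin n) ℝ :=
  fun i j => ∫ τ in (0:ℝ)..t₁,
    (NormedSpace.exp (τ • Aᵀ) * Cᵀ * C * NormedSpace.exp (τ • A)) i j

namespace ObsProofAux

open NormedSpace Polynomial Module Submodule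

variable {n q : ℕ}

/-- `M ↦ (B * M) *ᵥ x` as a linear map. -/
noncomputable def TL {p : ℕ} (B : Matrix (Fin p) (Fin n) ℝ) (x : Fin n → ℝ) :
    Matrix (Fin n) (Fin n) ℝ →ₗ[ℝ] (Fin p → ℝ) where
  toFun M := (B * M) *ᵥ x
  map_add' M N := by
    show (B * (M + N)) *ᵥ x = (B * M) *ᵥ x + (B * N) *ᵥ x
    rw [Matrix.mul_add, Matrix.add_mulVec]
  map_smul' c M := by
    show (B * (c • M)) *ᵥ x = c • ((B * M) *ᵥ x)
    rw [Matrix.mul_smul, Matrix.smul_mulVec]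

lemma continuous_exp_smul (A : Matrix (Fin n) (Fin n) ℝ) :
    Continuous fun τ : ℝ => exp (τ • A) := by
  letI : SeminormedRing (Matrix (Fin n) (Fin n) ℝ) := Matrix.linftyOpSemiNormedRing
  letI : NormedRing (Matrix (Fin n) (Fin n) ℝ) := Matrix.linftyOpNormedRing
  letI : NormedAlgebra ℝ (Matrix (Fin n) (Fin n) ℝ) := Matrix.linftyOpNormedAlgebra
  exact (continuous_iff_continuousAt.2 fun y => (exp_analytic (𝕂 := ℝ) y).continuousAt).comp
    (continuous_id.smul continuous_const)

lemma mulVec_exp_smul (A : Matrix (Fin n) (Fin n) ℝ) {p : ℕ} (B : Matrix (Fin p) (Fin n) ℝ)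
    (x : Fin n → ℝ) (h : ∀ k : ℕ, (B * A ^ k) *ᵥ x = 0) (τ : ℝ) :
    (B * exp (τ • A)) *ᵥ x = 0 := by
  letI : SeminormedRing (Matrix (Fin n) (Fin n) ℝ) := Matrix.linftyOpSemiNormedRing
  letI : NormedRing (Matrix (Fin n) (Fin n) ℝ) := Matrix.linftyOpNormedRing
  letI : NormedAlgebra ℝ (Matrix (Fin n) (Fin n) ℝ) := Matrix.linftyOpNormedAlgebra
  let T : Matrix (Fin n) (Fin n) ℝ →L[ℝ] (Fin p → ℝ) :=
    ⟨TL B x, (TL B x).continuous_of_finiteDimensional⟩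
  have hsum : Summable fun k : ℕ => ((k.factorial : ℝ)⁻¹ : ℝ) • (τ • A) ^ k :=
    expSeries_summable' (𝕂 := ℝ) (τ • A)
  have key : T (exp (τ • A)) = 0 := by
    rw [exp_eq_tsum ℝ]
    rw [show (fun x : Matrix (Fin n) (Fin n) ℝ => ∑' k : ℕ, ((k.factorial : ℝ)⁻¹ : ℝ) • x ^ k) (τ • A)
        = ∑' k : ℕ, ((k.factorial : ℝ)⁻¹ : ℝ) • (τ • A) ^ k from rfl]
    rw [T.map_tsum hsum]
    have hterm : ∀ k : ℕ, T (((k.factorial : ℝ)⁻¹ : ℝ) • (τ • A) ^ k) = 0 := by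
      intro k
      have hp : (τ • A) ^ k = τ ^ k • A ^ k := smul_pow τ A k
      rw [_root_.map_smul, hp, _root_.map_smul]
      have hz : T (A ^ k) = 0 := h k
      rw [hz, smul_zero, smul_zero]
    simp only [hterm, tsum_zero]
  exact key

lemma all_pow_mulVec_zero (A : Matrix (Fin n) (Fin n) ℝ) {p : ℕ} (C : Matrix (Fin p) (Fin n) ℝ)
    (x : Fin n → ℝ) (h : ∀ k, k < n → (C * A ^ k) *ᵥ x = 0) (k : ℕ) :
    (C * A ^ k) *ᵥ x = 0 := by
  rcases Nat.eq_zero_or_pos n with hn | hn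
  · subst hn
    funext i
    simp [Matrix.mulVec, dotProduct]
  · set S : Submodule ℝ (Fin n → ℝ) :=
      Submodule.span ℝ {v | ∃ j, j < n ∧ v = (A ^ j) *ᵥ x} with hS
    have hgen : ∀ j, j < n → (A ^ j) *ᵥ x ∈ S := fun j hj =>
      Submodule.subset_span ⟨j, hj, rfl⟩
    -- Cayley–Hamilton: `A ^ n *ᵥ x` is a combination of the lower powers.
    have hCH : (A ^ n) *ᵥ x
        = -∑ i ∈ Finset.range n, A.charpoly.coeff i • ((A ^ i) *ᵥ x) := by
      have h0 : aeval A A.charpoly = 0 := A.aeval_self_charpoly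
      have hdeg : A.charpoly.natDegree = n := by simp [A.charpoly_natDegree_eq_dim]
      have hlead : A.charpoly.coeff n = 1 := by
        have := A.charpoly_monic.coeff_natDegree
        rwa [hdeg] at this
      rw [Polynomial.aeval_eq_sum_range, hdeg, Finset.sum_range_succ, hlead, one_smul] at h0
      have hAn : A ^ n = -∑ i ∈ Finset.range n, A.charpoly.coeff i • A ^ i := by
        rw [eq_neg_iff_add_eq_zero, add_comm]
        exact h0
      let T0 : Matrix (Fin n) (Fin n) ℝ →ₗ[ℝ] (Fin n → ℝ) :=
        { toFun := fun M => M *ᵥ x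
          map_add' := fun M N => Matrix.add_mulVec M N x
          map_smul' := fun c M => by
            show (c • M) *ᵥ x = c • (M *ᵥ x)
            rw [Matrix.smul_mulVec] }
      have : T0 (A ^ n) = T0 (-∑ i ∈ Finset.range n, A.charpoly.coeff i • A ^ i) := by
        rw [hAn]
      rw [map_neg, map_sum] at this
      simp only [_root_.map_smul] at this
      exact this
    have hmapA : ∀ v ∈ S, A *ᵥ v ∈ S := by
      have hle : S ≤ S.comap A.mulVecLin := by
        rw [hS, Submodule.span_le]
        rintro v ⟨j, hj, rfl⟩
        simp only [Set.mem_setOf_eq, SetLike.mem_coe, Submodule.mem_comap,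
          Matrix.mulVecLin_apply]
        have hrw : A *ᵥ ((A ^ j) *ᵥ x) = (A ^ (j + 1)) *ᵥ x := by
          rw [Matrix.mulVec_mulVec, ← pow_succ']
        rw [hrw]
        rcases lt_or_eq_of_le (Nat.succ_le_of_lt hj) with hlt | heq
        · exact hgen _ hlt
        · have heq' : j + 1 = n := heq
          rw [heq', hCH]
          exact neg_mem (Submodule.sum_mem _ fun i hi =>
            Submodule.smul_mem _ _ (hgen i (Finset.mem_range.mp hi)))
      intro v hv
      simpa using hle hv
    have hk : ∀ k, (A ^ k) *ᵥ x ∈ S := by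
      intro k
      induction k with
      | zero => exact hgen 0 hn
      | succ k ih =>
        have := hmapA _ ih
        rwa [Matrix.mulVec_mulVec, ← pow_succ'] at this
    have hCS : S ≤ LinearMap.ker C.mulVecLin := by
      rw [hS, Submodule.span_le]
      rintro v ⟨j, hj, rfl⟩
      simp only [SetLike.mem_coe, LinearMap.mem_ker, Matrix.mulVecLin_apply]
      rw [Matrix.mulVec_mulVec]
      exact h j hj
    have := hCS (hk k)
    simp only [LinearMap.mem_ker, Matrix.mulVecLin_apply] at this
    rw [← Matrix.mulVec_mulVec]
    exact this

lemma integrand_symm (A : Matrix (Fin n) (Fin n) ℝ) (C : Matrix (Fin q) (Fin n) ℝ) (τ : ℝ) :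
    exp (τ • Aᵀ) * Cᵀ * C * exp (τ • A)
      = (C * exp (τ • A))ᵀ * (C * exp (τ • A)) := by
  have h1 : exp (τ • Aᵀ) = (exp (τ • A))ᵀ := by
    rw [← Matrix.transpose_smul, Matrix.exp_transpose]
  rw [h1, Matrix.transpose_mul, Matrix.mul_assoc, Matrix.mul_assoc]

lemma integrand_continuous_elem (A : Matrix (Fin n) (Fin n) ℝ) (C : Matrix (Fin q) (Fin n) ℝ)
    (i j : Fin n) :
    Continuous fun τ : ℝ => (exp (τ • Aᵀ) * Cᵀ * C * exp (τ • A)) i j := by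
  have hM : Continuous fun τ : ℝ => exp (τ • Aᵀ) * Cᵀ * C * exp (τ • A) :=
    (((continuous_exp_smul Aᵀ).matrix_mul continuous_const).matrix_mul
      continuous_const).matrix_mul (continuous_exp_smul A)
  exact hM.matrix_elem i j

lemma gram_mulVec_apply (A : Matrix (Fin n) (Fin n) ℝ) (C : Matrix (Fin q) (Fin n) ℝ)
    (t₁ : ℝ) (x : Fin n → ℝ) (i : Fin n) :
    ((obsGram A C t₁) *ᵥ x) i
      = ∫ τ in (0:ℝ)..t₁, ((exp (τ • Aᵀ) * Cᵀ * C * exp (τ • A)) *ᵥ x) i := by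
  show ∑ j, obsGram A C t₁ i j * x j = _
  have h1 : ∀ j : Fin n, obsGram A C t₁ i j * x j
      = ∫ τ in (0:ℝ)..t₁, (exp (τ • Aᵀ) * Cᵀ * C * exp (τ • A)) i j * x j := by
    intro j
    rw [obsGram, intervalIntegral.integral_mul_const]
  rw [Finset.sum_congr rfl fun j _ => h1 j]
  rw [← intervalIntegral.integral_finset_sum]
  · rfl
  · intro j _
    exact ((integrand_continuous_elem A C i j).mul continuous_const).intervalIntegrable _ _

lemma dot_gram (A : Matrix (Fin n) (Fin n) ℝ) (C : Matrix (Fin q) (Fin n) ℝ)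
    (t₁ : ℝ) (x : Fin n → ℝ) :
    x ⬝ᵥ ((obsGram A C t₁) *ᵥ x)
      = ∫ τ in (0:ℝ)..t₁,
          ((C * exp (τ • A)) *ᵥ x) ⬝ᵥ ((C * exp (τ • A)) *ᵥ x) := by
  have hint : ∀ i : Fin n, IntervalIntegrable
      (fun τ : ℝ => x i * ((exp (τ • Aᵀ) * Cᵀ * C * exp (τ • A)) *ᵥ x) i)
      MeasureTheory.volume 0 t₁ := by
    intro i
    refine (continuous_const.mul ?_).intervalIntegrable _ _
    show Continuous fun τ : ℝ => ∑ j, (exp (τ • Aᵀ) * Cᵀ * C * exp (τ • A)) i j * x j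
    exact continuous_finset_sum _ fun j _ =>
      (integrand_continuous_elem A C i j).mul continuous_const
  have h1 : x ⬝ᵥ ((obsGram A C t₁) *ᵥ x)
      = ∑ i, ∫ τ in (0:ℝ)..t₁,
          x i * ((exp (τ • Aᵀ) * Cᵀ * C * exp (τ • A)) *ᵥ x) i := by
    show ∑ i, x i * ((obsGram A C t₁) *ᵥ x) i = _
    refine Finset.sum_congr rfl fun i _ => ?_
    rw [gram_mulVec_apply, intervalIntegral.integral_const_mul]
  rw [h1, ← intervalIntegral.integral_finset_sum (fun i _ => hint i)]
  refine intervalIntegral.integral_congr fun τ _ => ?_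
  show x ⬝ᵥ ((exp (τ • Aᵀ) * Cᵀ * C * exp (τ • A)) *ᵥ x) = _
  rw [integrand_symm, ← Matrix.mulVec_mulVec, Matrix.dotProduct_mulVec,
    Matrix.vecMul_transpose]

lemma gram_transpose (A : Matrix (Fin n) (Fin n) ℝ) (C : Matrix (Fin q) (Fin n) ℝ) (t₁ : ℝ) :
    (obsGram A C t₁)ᵀ = obsGram A C t₁ := by
  ext i j
  show obsGram A C t₁ j i = obsGram A C t₁ i j
  unfold obsGram
  refine intervalIntegral.integral_congr fun τ _ => ?_
  rw [integrand_symm]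
  have hsym : ((C * exp (τ • A))ᵀ * (C * exp (τ • A)))ᵀ
      = (C * exp (τ • A))ᵀ * (C * exp (τ • A)) := by
    rw [Matrix.transpose_mul, Matrix.transpose_transpose]
  conv_lhs => rw [← hsym]
  rfl

/-- The identity linear equivalence between `Fin n → ℝ` and Euclidean space. -/
noncomputable def eE (n : ℕ) : (Fin n → ℝ) ≃ₗ[ℝ] EuclideanSpace ℝ (Fin n) :=
  (WithLp.linearEquiv 2 ℝ (Fin n → ℝ)).symm

lemma map_range_transpose_orth {m : Type*} [Fintype m] (M : Matrix m (Fin n) ℝ) :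
    Submodule.map (eE n : (Fin n → ℝ) →ₗ[ℝ] EuclideanSpace ℝ (Fin n))
        (LinearMap.range Mᵀ.mulVecLin)
      = (Submodule.map (eE n : (Fin n → ℝ) →ₗ[ℝ] EuclideanSpace ℝ (Fin n))
          (LinearMap.ker M.mulVecLin))ᗮ := by
  classical
  have hle : Submodule.map (eE n : (Fin n → ℝ) →ₗ[ℝ] EuclideanSpace ℝ (Fin n))
      (LinearMap.range Mᵀ.mulVecLin)
      ≤ (Submodule.map (eE n : (Fin n → ℝ) →ₗ[ℝ] EuclideanSpace ℝ (Fin n))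
          (LinearMap.ker M.mulVecLin))ᗮ := by
    rintro v hv
    obtain ⟨w, hw, rfl⟩ := hv
    obtain ⟨u, rfl⟩ := hw
    rw [Submodule.mem_orthogonal]
    rintro z hz
    obtain ⟨y, hy, rfl⟩ := hz
    have hy0 : M *ᵥ y = 0 := hy
    show (inner ℝ (eE n y) (eE n (Mᵀ.mulVecLin u)) : ℝ) = 0
    have hinner : (inner ℝ (eE n y) (eE n (Mᵀ.mulVecLin u)) : ℝ) = y ⬝ᵥ (Mᵀ *ᵥ u) := by
      rw [PiLp.inner_apply]
      simp only [RCLike.inner_apply, starRingEnd_apply, star_trivial]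
      exact Finset.sum_congr rfl fun i _ => mul_comm _ _
    rw [hinner, Matrix.dotProduct_mulVec, Matrix.vecMul_transpose, hy0,
      zero_dotProduct]
  refine Submodule.eq_of_le_of_finrank_le hle ?_
  have h1 : finrank ℝ (Submodule.map (eE n : (Fin n → ℝ) →ₗ[ℝ] EuclideanSpace ℝ (Fin n))
      (LinearMap.range Mᵀ.mulVecLin)) = finrank ℝ (LinearMap.range Mᵀ.mulVecLin) :=
    LinearEquiv.finrank_map_eq (eE n) _
  have h2 : finrank ℝ (Submodule.map (eE n : (Fin n → ℝ) →ₗ[ℝ] EuclideanSpace ℝ (Fin n))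
      (LinearMap.ker M.mulVecLin)) = finrank ℝ (LinearMap.ker M.mulVecLin) :=
    LinearEquiv.finrank_map_eq (eE n) _
  have h3 := Submodule.finrank_add_finrank_orthogonal
    (K := Submodule.map (eE n : (Fin n → ℝ) →ₗ[ℝ] EuclideanSpace ℝ (Fin n))
      (LinearMap.ker M.mulVecLin))
  have h4 : finrank ℝ (EuclideanSpace ℝ (Fin n)) = n := finrank_euclideanSpace_fin
  have h5 := LinearMap.finrank_range_add_finrank_ker M.mulVecLin
  have h6 : finrank ℝ (Fin n → ℝ) = n := Module.finrank_fin_fun ℝ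
  have h7 : finrank ℝ (LinearMap.range Mᵀ.mulVecLin)
      = finrank ℝ (LinearMap.range M.mulVecLin) := by
    show Mᵀ.rank = M.rank
    exact Matrix.rank_transpose M
  omega

/-- If two real matrices (with the same column index type) have the same kernel,
their transposes have the same range. -/
lemma range_transpose_eq_of_ker_eq {m m' : Type*} [Fintype m] [Fintype m']
    (M : Matrix m (Fin n) ℝ) (N : Matrix m' (Fin n) ℝ)
    (h : LinearMap.ker M.mulVecLin = LinearMap.ker N.mulVecLin) :
    LinearMap.range Mᵀ.mulVecLin = LinearMap.range Nᵀ.mulVecLin := by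
  have h1 := map_range_transpose_orth M
  rw [h, ← map_range_transpose_orth N] at h1
  exact Submodule.map_injective_of_injective (eE n).injective h1

lemma obsMat_mulVec_eq_zero_iff (A : Matrix (Fin n) (Fin n) ℝ) (C : Matrix (Fin q) (Fin n) ℝ)
    (x : Fin n → ℝ) :
    (obsMat C A) *ᵥ x = 0 ↔ ∀ k, k < n → (C * A ^ k) *ᵥ x = 0 := by
  constructor
  · intro hx k hk
    funext i
    exact congrFun hx (⟨k, hk⟩, i)
  · intro h
    funext ki
    obtain ⟨k, i⟩ := ki
    exact congrFun (h (k : ℕ) k.isLt) i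

lemma ker_gram_eq_ker_obs (A : Matrix (Fin n) (Fin n) ℝ) (C : Matrix (Fin q) (Fin n) ℝ)
    (t₁ : ℝ) (ht₁ : 0 < t₁) :
    LinearMap.ker (obsGram A C t₁).mulVecLin = LinearMap.ker (obsMat C A).mulVecLin := by
  letI : SeminormedRing (Matrix (Fin n) (Fin n) ℝ) := Matrix.linftyOpSemiNormedRing
  letI : NormedRing (Matrix (Fin n) (Fin n) ℝ) := Matrix.linftyOpNormedRing
  letI : NormedAlgebra ℝ (Matrix (Fin n) (Fin n) ℝ) := Matrix.linftyOpNormedAlgebra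
  ext x
  simp only [LinearMap.mem_ker, Matrix.mulVecLin_apply]
  constructor
  · -- W x = 0 → O x = 0
    intro hx
    -- the function g τ = C exp(τA) x has zero "energy"
    have hTgc : Continuous fun τ : ℝ => (C * exp (τ • A)) *ᵥ x := by
      let T : Matrix (Fin n) (Fin n) ℝ →L[ℝ] (Fin q → ℝ) :=
        ⟨TL C x, (TL C x).continuous_of_finiteDimensional⟩
      exact T.continuous.comp (continuous_exp_smul A)
    have hgq : Continuous fun τ : ℝ =>
        ((C * exp (τ • A)) *ᵥ x) ⬝ᵥ ((C * exp (τ • A)) *ᵥ x) := by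
      refine continuous_finset_sum _ fun i _ => ?_
      exact ((continuous_apply i).comp hTgc).mul ((continuous_apply i).comp hTgc)
    have hnonneg : ∀ τ : ℝ,
        0 ≤ ((C * exp (τ • A)) *ᵥ x) ⬝ᵥ ((C * exp (τ • A)) *ᵥ x) := fun τ =>
      Finset.sum_nonneg fun i _ => mul_self_nonneg _
    have hintzero : (∫ τ in (0:ℝ)..t₁,
        ((C * exp (τ • A)) *ᵥ x) ⬝ᵥ ((C * exp (τ • A)) *ᵥ x)) = 0 := by
      rw [← dot_gram, hx, dotProduct_zero]
    have hg0 : ∀ τ ∈ Set.Ioo (0:ℝ) t₁, (C * exp (τ • A)) *ᵥ x = 0 := by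
      intro τ hτ
      by_contra hne
      have hpos : 0 < ((C * exp (τ • A)) *ᵥ x) ⬝ᵥ ((C * exp (τ • A)) *ᵥ x) :=
        lt_of_le_of_ne (hnonneg τ)
          (fun hc => hne (dotProduct_self_eq_zero.mp hc.symm))
      have := intervalIntegral.integral_pos ht₁ hgq.continuousOn
        (fun s _ => hnonneg s) ⟨τ, Set.Ioo_subset_Icc_self hτ, hpos⟩
      rw [hintzero] at this
      exact lt_irrefl 0 this
    -- by induction all the functions C A^k exp(τA) x vanish on (0, t₁)
    have hFk : ∀ k : ℕ, ∀ τ ∈ Set.Ioo (0:ℝ) t₁, (C * A ^ k * exp (τ • A)) *ᵥ x = 0 := by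
      intro k
      induction k with
      | zero =>
        intro τ hτ
        simpa using hg0 τ hτ
      | succ k ih =>
        intro τ₀ hτ₀
        let T : Matrix (Fin n) (Fin n) ℝ →L[ℝ] (Fin q → ℝ) :=
          ⟨TL (C * A ^ k) x, (TL (C * A ^ k) x).continuous_of_finiteDimensional⟩
        have hd1 : HasDerivAt (fun τ : ℝ => (C * A ^ k * exp (τ • A)) *ᵥ x)
            ((C * A ^ k * (exp (τ₀ • A) * A)) *ᵥ x) τ₀ :=
          T.hasFDerivAt.comp_hasDerivAt τ₀ (hasDerivAt_exp_smul_const (𝕂 := ℝ) A τ₀)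
        have hev : (fun τ : ℝ => (C * A ^ k * exp (τ • A)) *ᵥ x)
            =ᶠ[nhds τ₀] fun _ => (0 : Fin q → ℝ) := by
          filter_upwards [isOpen_Ioo.mem_nhds hτ₀] with τ hτ
          exact ih τ hτ
        have hd0 : HasDerivAt (fun τ : ℝ => (C * A ^ k * exp (τ • A)) *ᵥ x)
            (0 : Fin q → ℝ) τ₀ :=
          (hasDerivAt_const τ₀ (0 : Fin q → ℝ)).congr_of_eventuallyEq hev
        have huniq : (C * A ^ k * (exp (τ₀ • A) * A)) *ᵥ x = 0 := hd1.unique hd0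
        have hcomm : exp (τ₀ • A) * A = A * exp (τ₀ • A) :=
          (((Commute.refl A).smul_left τ₀).exp_left).eq
        rw [hcomm] at huniq
        have : C * A ^ k * (A * exp (τ₀ • A)) = C * A ^ (k + 1) * exp (τ₀ • A) := by
          simp only [pow_succ, Matrix.mul_assoc]
        rwa [this] at huniq
    -- transfer from the point t₁/2 back to τ = 0
    set s : ℝ := t₁ / 2 with hs
    have hsmem : s ∈ Set.Ioo (0:ℝ) t₁ := ⟨half_pos ht₁, half_lt_self ht₁⟩
    set y : Fin n → ℝ := exp (s • A) *ᵥ x with hy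
    have hky : ∀ k : ℕ, (C * A ^ k) *ᵥ y = 0 := by
      intro k
      have := hFk k s hsmem
      rwa [← Matrix.mulVec_mulVec] at this
    have hxy : x = exp ((-s) • A) *ᵥ y := by
      rw [hy, Matrix.mulVec_mulVec]
      have hcomm : Commute ((-s) • A) (s • A) :=
        ((Commute.refl A).smul_right s).smul_left (-s)
      rw [← Matrix.exp_add_of_commute _ _ hcomm]
      rw [← add_smul, neg_add_cancel, zero_smul, exp_zero, Matrix.one_mulVec]
    have hkx : ∀ j, j < n → (C * A ^ j) *ᵥ x = 0 := by
      intro j _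
      rw [hxy, Matrix.mulVec_mulVec]
      refine mulVec_exp_smul A (C * A ^ j) y ?_ (-s)
      intro k
      rw [Matrix.mul_assoc, ← pow_add]
      exact hky (j + k)
    exact (obsMat_mulVec_eq_zero_iff A C x).mpr hkx
  · -- O x = 0 → W x = 0
    intro hx
    have h1 : ∀ k, k < n → (C * A ^ k) *ᵥ x = 0 := (obsMat_mulVec_eq_zero_iff A C x).mp hx
    have h2 : ∀ k : ℕ, (C * A ^ k) *ᵥ x = 0 := all_pow_mulVec_zero A C x h1
    have h3 : ∀ τ : ℝ, (exp (τ • Aᵀ) * Cᵀ * C * exp (τ • A)) *ᵥ x = 0 := by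
      intro τ
      have h4 : (C * exp (τ • A)) *ᵥ x = 0 := mulVec_exp_smul A C x h2 τ
      have : exp (τ • Aᵀ) * Cᵀ * C * exp (τ • A)
          = (exp (τ • Aᵀ) * Cᵀ) * (C * exp (τ • A)) := by
        rw [Matrix.mul_assoc, Matrix.mul_assoc]
      rw [this, ← Matrix.mulVec_mulVec, h4, Matrix.mulVec_zero]
    funext i
    rw [show (0 : Fin n → ℝ) i = (0:ℝ) from rfl, gram_mulVec_apply]
    have : ∀ τ : ℝ, ((exp (τ • Aᵀ) * Cᵀ * C * exp (τ • A)) *ᵥ x) i = 0 := fun τ => by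
      rw [h3 τ]; rfl
    simp only [this, intervalIntegral.integral_zero]

end ObsProofAux

/-- The column space of the observability Gramian `W(t₁)` (for `t₁ > 0`) equals the
column space of `Oᵀ`, i.e. `Im(W(t₁))` equals the row space of the observability
matrix `O` viewed as a subspace of `ℝ^n`. -/
theorem gramian_image_eq_obs_rowspace {n q : ℕ}
    (A : Matrix (Fin n) (Fin n) ℝ) (C : Matrix (Fin q) (Fin n) ℝ)
    (t₁ : ℝ) (ht₁ : 0 < t₁) :
    LinearMap.range (obsGram A C t₁).mulVecLin =
      LinearMap.range (obsMat C A)ᵀ.mulVecLin := by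
  have hker := ObsProofAux.ker_gram_eq_ker_obs A C t₁ ht₁
  have h := ObsProofAux.range_transpose_eq_of_ker_eq (obsGram A C t₁) (obsMat C A) hker
  rwa [ObsProofAux.gram_transpose] at h
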